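/- Let μ and λ be geodesic currents on a finite-area hyperbolic surface with i(μ, λ) = 0, and suppose (a,b) ∈ supp(λ). Then the geodesic (a,b) is μ-somewhat short, i.e. μ(]a,b[ × ]b,a[) = 0. -/

import Mathlib

open MeasureTheory Set ENNReal

instance : Fact ((0:ℝ) < 1) := ⟨one_pos⟩

/-- The circle `∂H² = S¹`, as `ℝ/ℤ`. -/
abbrev Circ := AddCircle (1 : ℝ)

/-- The open arc `]a,b[` on a circularly ordered set. -/
def oarc {S : Type*} [CircularOrder S] (a b : S) : Set S := {x | sbtw a x b}

/-- Two geodesics, given as ordered pairs of endpoints, cross. -/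
def CrossesP {S : Type*} [CircularOrder S] (p q : S × S) : Prop :=
  Xor' (q.1 ∈ oarc p.1 p.2) (q.2 ∈ oarc p.1 p.2)

/-- The support of a measure: points all of whose open neighborhoods have positive
measure. -/
def msupport (ν : Measure (Circ × Circ)) : Set (Circ × Circ) :=
  {p | ∀ U : Set (Circ × Circ), IsOpen U → p ∈ U → 0 < ν U}

lemma sbtw_of_lt {u v w : ℝ} (h1 : u < v) (h2 : v < w) (h3 : w < u + 1) :
    sbtw (↑u : Circ) ↑v ↑w := by
  rw [sbtw_iff_not_btw, QuotientAddGroup.btw_coe_iff, not_le]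
  have hu : toIocMod one_pos w u = u + 1 :=
    (toIocMod_eq_iff one_pos).mpr ⟨⟨h3, by linarith⟩, ⟨-1, by simp⟩⟩
  have hv : toIcoMod one_pos w v = v + 1 :=
    (toIcoMod_eq_iff one_pos).mpr ⟨⟨by linarith, by linarith⟩, ⟨-1, by simp⟩⟩
  rw [hu, hv]; linarith

lemma coe_toIcoMod' (A x : ℝ) : ((toIcoMod one_pos A x : ℝ) : Circ) = ↑x := by
  obtain ⟨z, hz⟩ := ((toIcoMod_eq_iff (one_pos : (0:ℝ) < 1)
    (a := A) (b := x) (c := toIcoMod one_pos A x)).mp rfl).2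
  have hm : ((z • (1:ℝ) : ℝ) : Circ) = 0 :=
    (QuotientAddGroup.eq_zero_iff _).mpr (AddSubgroup.zsmul_mem_zmultiples _ z)
  conv_rhs => rw [hz]
  rw [QuotientAddGroup.mk_add, hm, add_zero]

lemma exists_lift {A B : ℝ} (hAB : A < B) (hB1 : B < A + 1) {u : Circ}
    (h : sbtw (↑A) u ↑B) : ∃ U : ℝ, A < U ∧ U < B ∧ u = ↑U := by
  obtain ⟨u₀, rfl⟩ := QuotientAddGroup.mk_surjective u
  set U := toIcoMod one_pos A u₀ with hUdef
  have hU : (u₀ : Circ) = ↑U := (coe_toIcoMod' A u₀).symm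
  have hmem := toIcoMod_mem_Ico one_pos A u₀
  rw [Set.mem_Ico, ← hUdef] at hmem
  rcases hmem.1.eq_or_lt with hA | hA
  · exfalso
    rw [hU, ← hA] at h
    exact sbtw_irrefl_left h
  rcases lt_trichotomy U B with hB | hB | hB
  · exact ⟨U, hA, hB, hU⟩
  · exfalso
    rw [hU, hB] at h
    exact sbtw_irrefl_right h
  · exfalso
    have h' : sbtw (↑B : Circ) ↑U ↑(A + 1) := sbtw_of_lt hB hmem.2 (by linarith)
    rw [show ((A + 1 : ℝ) : Circ) = ↑A from AddCircle.coe_add_period 1 A] at h'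
    rw [hU] at h
    exact sbtw_asymm h h'

lemma crossing_lemma {A B d : ℝ} (h1 : A + d < B - d) (h2 : B + d < A + 1 - d)
    (hd : 0 < d) {p q : Circ × Circ}
    (hp : p ∈ (oarc (↑(A+d)) (↑(B-d))) ×ˢ (oarc (↑(B+d)) (↑(A-d))))
    (hq : q ∈ (oarc (↑(A-d)) (↑(A+d))) ×ˢ (oarc (↑(B-d)) (↑(B+d)))) :
    CrossesP p q := by
  obtain ⟨hp1, hp2⟩ := hp
  obtain ⟨hq1, hq2⟩ := hq
  obtain ⟨u, hu1, hu2, hu⟩ := exists_lift h1 (by linarith) hp1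
  rw [show ((A - d : ℝ) : Circ) = ↑(A + 1 - d) by
    rw [show A + 1 - d = (A - d) + 1 by ring, AddCircle.coe_add_period]] at hp2
  obtain ⟨v, hv1, hv2, hv⟩ := exists_lift h2 (by linarith) hp2
  obtain ⟨C, hC1, hC2, hC⟩ := exists_lift (by linarith) (by linarith) hq1
  obtain ⟨E, hE1, hE2, hE⟩ := exists_lift (by linarith) (by linarith) hq2
  unfold CrossesP
  rw [hu, hv, hC, hE]
  refine Or.inr ⟨?_, ?_⟩
  · exact sbtw_of_lt (by linarith) (by linarith) (by linarith)
  · intro hcon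
    have h' : sbtw (↑v : Circ) ↑(C+1) ↑(u+1) :=
      sbtw_of_lt (by linarith) (by linarith) (by linarith)
    rw [AddCircle.coe_add_period 1 C, AddCircle.coe_add_period 1 u] at h'
    exact sbtw_asymm hcon h'

/-- if the geodesic currents `μ` and `ν` have vanishing intersection
number — i.e. `μ × ν` gives zero mass to the set of crossing pairs of geodesics —
and `(a,b) ∈ supp ν`, then `(a,b)` is `μ`-somewhat short. -/
theorem somewhat_short_of_zero_intersection
    (μ ν : Measure (Circ × Circ)) [SFinite ν]
    (hflip : ∀ A B : Set Circ, μ (A ×ˢ B) = μ (B ×ˢ A))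
    (hD : (μ.prod ν) {pq : (Circ × Circ) × (Circ × Circ) | CrossesP pq.1 pq.2} = 0)
    (a b : Circ) (hne : a ≠ b) (hab : (a, b) ∈ msupport ν) :
    μ ((oarc a b) ×ˢ (oarc b a)) = 0 := by
  obtain ⟨A, rfl⟩ := QuotientAddGroup.mk_surjective a
  obtain ⟨b₀, rfl⟩ := QuotientAddGroup.mk_surjective b
  set B := toIcoMod one_pos A b₀ with hBdef
  have hBb : ((b₀ : ℝ) : Circ) = ↑B := (coe_toIcoMod' A b₀).symm
  have hmem := toIcoMod_mem_Ico one_pos A b₀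
  rw [Set.mem_Ico, ← hBdef] at hmem
  have hAB : A < B := lt_of_le_of_ne hmem.1 (fun h => hne (by rw [hBb, ← h]))
  have hB1 : B < A + 1 := hmem.2
  rw [hBb] at hab ⊢
  set ε := min (B - A) (A + 1 - B) / 4 with hεdef
  have hε : 0 < ε := by
    have := lt_min (by linarith : (0:ℝ) < B - A) (by linarith : (0:ℝ) < A + 1 - B)
    positivity
  have hε1 : 4 * ε ≤ B - A := by
    have := min_le_left (B - A) (A + 1 - B); rw [hεdef]; linarith
  have hε2 : 4 * ε ≤ A + 1 - B := by
    have := min_le_right (B - A) (A + 1 - B); rw [hεdef]; linarith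
  set δ : ℕ → ℝ := fun n => ε / (n + 1) with hδdef
  have hδpos : ∀ n, 0 < δ n := fun n => by positivity
  have hδle : ∀ n, δ n ≤ ε := fun n => by
    show ε / ((n : ℝ) + 1) ≤ ε
    exact div_le_self hε.le (le_add_of_nonneg_left (Nat.cast_nonneg n))
  set P : ℕ → Set (Circ × Circ) :=
    fun n => (oarc (↑(A + δ n)) (↑(B - δ n))) ×ˢ (oarc (↑(B + δ n)) (↑(A - δ n))) with hPdef
  have μP : ∀ n, μ (P n) = 0 := by
    intro n
    set d := δ n with hddef
    have hd : 0 < d := hδpos n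
    have hdε : d ≤ ε := hδle n
    have h1 : A + d < B - d := by linarith
    have h2 : B + d < A + 1 - d := by linarith
    set Q : Set (Circ × Circ) :=
      (oarc (↑(A - d)) (↑(A + d))) ×ˢ (oarc (↑(B - d)) (↑(B + d))) with hQdef
    have hsub : P n ×ˢ Q ⊆
        {pq : (Circ × Circ) × (Circ × Circ) | CrossesP pq.1 pq.2} := by
      rintro ⟨p, q⟩ ⟨hp, hq⟩
      exact crossing_lemma h1 h2 hd hp hq
    have hprod0 : μ (P n) * ν Q = 0 := by
      rw [← Measure.prod_prod]
      exact le_antisymm (hD ▸ measure_mono hsub) zero_le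
    have hν : 0 < ν Q := by
      set U : Set (Circ × Circ) :=
        (((↑) : ℝ → Circ) '' Ioo (A - d) (A + d)) ×ˢ
          (((↑) : ℝ → Circ) '' Ioo (B - d) (B + d)) with hUdef
      have hopen : IsOpen U :=
        IsOpen.prod (QuotientAddGroup.isOpenMap_coe _ isOpen_Ioo)
          (QuotientAddGroup.isOpenMap_coe _ isOpen_Ioo)
      have hUmem : ((↑A : Circ), (↑B : Circ)) ∈ U :=
        ⟨⟨A, ⟨by linarith, by linarith⟩, rfl⟩, ⟨B, ⟨by linarith, by linarith⟩, rfl⟩⟩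
      have hUQ : U ⊆ Q := by
        rintro ⟨x, y⟩ ⟨⟨X, hX, rfl⟩, ⟨Y, hY, rfl⟩⟩
        exact ⟨sbtw_of_lt (by linarith [hX.1]) (by linarith [hX.2]) (by linarith),
          sbtw_of_lt (by linarith [hY.1]) (by linarith [hY.2]) (by linarith)⟩
      exact lt_of_lt_of_le (hab U hopen hUmem) (measure_mono hUQ)
    exact (mul_eq_zero.mp hprod0).resolve_right hν.ne'
  have hcover : (oarc (↑A) (↑B)) ×ˢ (oarc (↑B) (↑A)) ⊆ ⋃ n, P n := by
    rintro ⟨u, v⟩ ⟨hu, hv⟩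
    obtain ⟨U, hU1, hU2, hU⟩ := exists_lift hAB hB1 hu
    rw [show ((A : ℝ) : Circ) = ↑(A + 1) from (AddCircle.coe_add_period 1 A).symm] at hv
    obtain ⟨V, hV1, hV2, hV⟩ := exists_lift (by linarith) (by linarith) hv
    set m := min (min (U - A) (B - U)) (min (V - B) (A + 1 - V)) with hmdef
    have hm : 0 < m :=
      lt_min (lt_min (by linarith) (by linarith)) (lt_min (by linarith) (by linarith))
    have hm1 : m ≤ U - A := le_trans (min_le_left _ _) (min_le_left _ _)
    have hm2 : m ≤ B - U := le_trans (min_le_left _ _) (min_le_right _ _)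
    have hm3 : m ≤ V - B := le_trans (min_le_right _ _) (min_le_left _ _)
    have hm4 : m ≤ A + 1 - V := le_trans (min_le_right _ _) (min_le_right _ _)
    obtain ⟨n, hn⟩ := exists_nat_gt (ε / m)
    have hδm : δ n < m := by
      rw [div_lt_iff₀ hm] at hn
      show ε / ((n : ℝ) + 1) < m
      rw [div_lt_iff₀ (by positivity : (0:ℝ) < (n:ℝ) + 1)]
      nlinarith [hm.le]
    have hdn : 0 < δ n := hδpos n
    refine Set.mem_iUnion.mpr ⟨n, ?_, ?_⟩
    · rw [hU]
      exact sbtw_of_lt (by linarith) (by linarith) (by linarith)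
    · rw [hV, show ((A - δ n : ℝ) : Circ) = ↑(A + 1 - δ n) by
        rw [show A + 1 - δ n = (A - δ n) + 1 by ring, AddCircle.coe_add_period]]
      exact sbtw_of_lt (by linarith) (by linarith) (by linarith)
  exact measure_mono_null hcover (measure_iUnion_null μP)
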